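/- Let p be an odd prime and let G be a finite group of order p^k and nilpotency class 2 whose commutator subgroup has exponent p^t. Then the sets Z_i = {x ∈ G | x^{p^i} ∈ Z(G)}, for 0 ≤ i ≤ t, form a strictly increasing chain Z(G) = Z_0 ⊊ Z_1 ⊊ ⋯ ⊊ Z_t = G; in particular each Z_i is a subgroup of G and x^{p^t} ∈ Z(G) for every x ∈ G. -/

import Mathlib

open scoped commutatorElement

lemma aux_comm_central {G : Type*} [Group G] (hclass : commutator G ≤ Subgroup.center G)
    (x y : G) : ⁅x, y⁆ ∈ Subgroup.center G :=
  hclass (Subgroup.commutator_mem_commutator (Subgroup.mem_top x) (Subgroup.mem_top y))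

lemma aux_comm_mul {G : Type*} [Group G] (hclass : commutator G ≤ Subgroup.center G)
    (a b y : G) : ⁅a * b, y⁆ = ⁅a, y⁆ * ⁅b, y⁆ := by
  have h1 : ⁅a * b, y⁆ = a * ⁅b, y⁆ * a⁻¹ * ⁅a, y⁆ := by group
  have h2 := (Subgroup.mem_center_iff.mp (aux_comm_central hclass b y)) a
  rw [h1, h2, mul_inv_cancel_right]
  exact Subgroup.mem_center_iff.mp (aux_comm_central hclass a y) ⁅b, y⁆

lemma aux_comm_pow {G : Type*} [Group G] (hclass : commutator G ≤ Subgroup.center G)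
    (x y : G) (n : ℕ) : ⁅x ^ n, y⁆ = ⁅x, y⁆ ^ n := by
  induction n with
  | zero => simp
  | succ n ih =>
    rw [pow_succ, aux_comm_mul hclass, ih, ← pow_succ]

lemma aux_mem_center_iff {G : Type*} [Group G] (hclass : commutator G ≤ Subgroup.center G)
    (x : G) (n : ℕ) :
    x ^ n ∈ Subgroup.center G ↔ ∀ y : G, ⁅x, y⁆ ^ n = 1 := by
  rw [Subgroup.mem_center_iff]
  constructor
  · intro h y
    rw [← aux_comm_pow hclass, commutatorElement_eq_one_iff_mul_comm]
    exact (h y).symm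
  · intro h y
    have hy := h y
    rw [← aux_comm_pow hclass, commutatorElement_eq_one_iff_mul_comm] at hy
    exact hy.symm


/-- Let `p` be an odd prime and `G` a finite group of order `p^k` and
nilpotency class 2 whose commutator subgroup has exponent `p^t`. Then the sets
`Z i = {x | x^(p^i) ∈ Z(G)}` form a strictly increasing chain
`Z(G) = Z 0 ⊊ Z 1 ⊊ ⋯ ⊊ Z t = G`, and each `Z i` is (the carrier of) a subgroup of `G`. -/
theorem stmt_11 {G : Type*} [Group G] [Finite G]
    (p k t : ℕ) (hp : p.Prime) (hodd : Odd p)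
    (hcard : Nat.card G = p ^ k)
    (hclass : commutator G ≤ Subgroup.center G)
    (hnonab : commutator G ≠ ⊥)
    (hexp : Monoid.exponent ↥(commutator G) = p ^ t) :
    ({x : G | x ^ (p ^ 0) ∈ Subgroup.center G} = (Subgroup.center G : Set G)) ∧
    ({x : G | x ^ (p ^ t) ∈ Subgroup.center G} = Set.univ) ∧
    (∀ i ≤ t, ∃ H : Subgroup G, (H : Set G) = {x : G | x ^ (p ^ i) ∈ Subgroup.center G}) ∧
    (∀ i < t, {x : G | x ^ (p ^ i) ∈ Subgroup.center G} ⊂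
      {x : G | x ^ (p ^ (i + 1)) ∈ Subgroup.center G}) := by
  have hcpt : ∀ x y : G, ⁅x, y⁆ ^ (p ^ t) = 1 := by
    intro x y
    have hm : ⁅x, y⁆ ∈ commutator G :=
      Subgroup.commutator_mem_commutator (Subgroup.mem_top x) (Subgroup.mem_top y)
    have h1 := Monoid.pow_exponent_eq_one (⟨⁅x, y⁆, hm⟩ : ↥(commutator G))
    rw [hexp] at h1
    exact_mod_cast congrArg (Subgroup.subtype _) h1
  have hZt : {x : G | x ^ (p ^ t) ∈ Subgroup.center G} = Set.univ := by
    ext x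
    simp only [Set.mem_setOf_eq, Set.mem_univ, iff_true]
    exact (aux_mem_center_iff hclass x _).mpr (fun y => hcpt x y)
  have hsub : ∀ i : ℕ, ∃ H : Subgroup G,
      (H : Set G) = {x : G | x ^ (p ^ i) ∈ Subgroup.center G} := by
    intro i
    refine ⟨{ carrier := {x : G | x ^ (p ^ i) ∈ Subgroup.center G},
              mul_mem' := ?_, one_mem' := ?_, inv_mem' := ?_ }, rfl⟩
    · intro a b ha hb
      simp only [Set.mem_setOf_eq] at *
      rw [aux_mem_center_iff hclass] at *
      intro y
      rw [aux_comm_mul hclass]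
      have hcomm : Commute ⁅a, y⁆ ⁅b, y⁆ :=
        (Subgroup.mem_center_iff.mp (aux_comm_central hclass a y) _).symm
      rw [hcomm.mul_pow, ha y, hb y, one_mul]
    · simp only [Set.mem_setOf_eq, one_pow]; exact Subgroup.one_mem _
    · intro a ha
      simp only [Set.mem_setOf_eq] at *
      rw [inv_pow]
      exact Subgroup.inv_mem _ ha
  have hmono : ∀ i : ℕ, {x : G | x ^ (p ^ i) ∈ Subgroup.center G} ⊆
      {x : G | x ^ (p ^ (i + 1)) ∈ Subgroup.center G} := by
    intro i x hx
    simp only [Set.mem_setOf_eq] at *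
    rw [pow_succ, pow_mul]
    exact Subgroup.pow_mem _ hx p
  refine ⟨by ext x; simp, hZt, fun i _ => hsub i, fun i hi => ?_⟩
  refine ⟨hmono i, fun hsup => ?_⟩
  have key : ∀ j : ℕ, {x : G | x ^ (p ^ (i + j)) ∈ Subgroup.center G} ⊆
      {x : G | x ^ (p ^ i) ∈ Subgroup.center G} := by
    intro j
    induction j with
    | zero => exact fun x hx => hx
    | succ j ih =>
      intro x hx
      simp only [Set.mem_setOf_eq] at hx ⊢
      have hxp : x ^ p ∈ {x : G | x ^ (p ^ (i + j)) ∈ Subgroup.center G} := by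
        simp only [Set.mem_setOf_eq]
        rw [← pow_mul, ← pow_succ']
        exact hx
      have h3 := ih hxp
      simp only [Set.mem_setOf_eq] at h3
      rw [← pow_mul, ← pow_succ'] at h3
      have h4 : x ∈ {x : G | x ^ (p ^ (i + 1)) ∈ Subgroup.center G} := h3
      exact hsup h4
  have hall : ∀ x : G, x ^ (p ^ i) ∈ Subgroup.center G := by
    intro x
    have hx : x ∈ {x : G | x ^ (p ^ (i + (t - i))) ∈ Subgroup.center G} := by
      rw [Nat.add_sub_cancel' hi.le]
      have : x ∈ {x : G | x ^ (p ^ t) ∈ Subgroup.center G} := by rw [hZt]; trivial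
      exact this
    exact key (t - i) hx
  have hdvd : Monoid.exponent ↥(commutator G) ∣ p ^ i := by
    apply Monoid.exponent_dvd_of_forall_pow_eq_one
    rintro ⟨g, hg⟩
    rw [commutator_eq_closure] at hg
    have hg1 : g ^ (p ^ i) = 1 := by
      induction hg using Subgroup.closure_induction with
      | mem z hz =>
        obtain ⟨a, b, rfl⟩ := hz
        exact (aux_mem_center_iff hclass a _).mp (hall a) b
      | one => simp
      | mul z w hz hw ihz ihw =>
        have hcz : z ∈ Subgroup.center G := hclass (by rwa [commutator_eq_closure])
        have hcomm : Commute z w := (Subgroup.mem_center_iff.mp hcz w).symm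
        rw [hcomm.mul_pow, ihz (by rw [commutator_eq_closure]; exact hz),
          ihw (by rw [commutator_eq_closure]; exact hw), one_mul]
      | inv z hz ihz =>
        rw [inv_pow, ihz (by rw [commutator_eq_closure]; exact hz), inv_one]
    exact Subtype.ext (by simpa using hg1)
  rw [hexp] at hdvd
  have hle := (Nat.pow_dvd_pow_iff_le_right hp.one_lt).mp hdvd
  omega
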